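/- For 0 < r < 1 and x ∈ (0, π), ι(x) > 0, and ι attains its maximum on [0, π] at the unique point a_r ∈ (0, π/2) with cos a_r = r, where ι(a_r) = π/2 − a_r. -/

import Mathlib

open Real

/-- The incident angle function of the off-center reflection. -/
noncomputable def iota (r x : ℝ) : ℝ :=
  Complex.arg ((Real.cos x - r : ℝ) + (Real.sin x : ℝ) * Complex.I) - x

/-- Lift of the off-center reflection taking 0 to Ω. -/
noncomputable def Rt (r Ω x : ℝ) : ℝ := x + Ω - 2 * iota r x

lemma aux_arg_arctan {w : ℂ} (hw : 0 < w.re) :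
    Complex.arg w = Real.arctan (w.im / w.re) := by
  set t := w.im / w.re with ht
  have hwt : w = (w.re : ℂ) * (1 + (t : ℝ) * Complex.I) := by
    apply Complex.ext <;> simp [ht] <;> field_simp
  have h1 : (1 + (t : ℝ) * Complex.I) =
      (Real.sqrt (1 + t ^ 2) : ℝ) * (Real.cos (Real.arctan t) + Real.sin (Real.arctan t) * Complex.I) := by
    have hs : (0:ℝ) < Real.sqrt (1 + t ^ 2) := Real.sqrt_pos.2 (by positivity)
    apply Complex.ext <;>
      simp [Real.cos_arctan, Real.sin_arctan] <;> field_simp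
  have hpi : Real.arctan t ∈ Set.Ioc (-π) π := by
    constructor
    · linarith [Real.neg_pi_div_two_lt_arctan t, Real.pi_pos]
    · linarith [Real.arctan_lt_pi_div_two t, Real.pi_pos]
  rw [hwt, Complex.arg_real_mul _ hw, h1,
    Complex.arg_real_mul _ (Real.sqrt_pos.2 (by positivity : (0:ℝ) < 1 + t ^ 2)),
    Complex.ofReal_cos, Complex.ofReal_sin]
  exact Complex.arg_cos_add_sin_mul_I hpi

lemma aux_ub {r x : ℝ} (hr0 : 0 < r) (hr1 : r < 1) (hx : x ∈ Set.Icc 0 Real.pi) :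
    Real.arctan (r * Real.sin x / (1 - r * Real.cos x)) ≤ π - x := by
  rcases le_or_gt x (π / 2) with h | h
  · have := Real.arctan_lt_pi_div_two (r * Real.sin x / (1 - r * Real.cos x))
    linarith
  · set y := π - x with hy
    have hy0 : 0 ≤ y := by simp [hy]; exact hx.2
    have hy2 : y < π / 2 := by simp [hy]; linarith
    have hcos : Real.cos x = -Real.cos y := by rw [hy]; simp [Real.cos_pi_sub]
    have hsin : Real.sin x = Real.sin y := by rw [hy]; simp [Real.sin_pi_sub]
    have hcy : 0 < Real.cos y := Real.cos_pos_of_mem_Ioo ⟨by linarith [Real.pi_pos], hy2⟩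
    have hsy : 0 ≤ Real.sin y := Real.sin_nonneg_of_nonneg_of_le_pi hy0 (by linarith [Real.pi_pos])
    have hden : 0 < 1 + r * Real.cos y := by nlinarith
    have hle : r * Real.sin y / (1 + r * Real.cos y) ≤ Real.tan y := by
      rw [Real.tan_eq_sin_div_cos, div_le_div_iff₀ hden hcy]
      nlinarith
    calc Real.arctan (r * Real.sin x / (1 - r * Real.cos x))
        = Real.arctan (r * Real.sin y / (1 + r * Real.cos y)) := by
          rw [hcos, hsin]; ring_nf
      _ ≤ Real.arctan (Real.tan y) := Real.arctan_strictMono.monotone hle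
      _ = y := Real.arctan_tan (by linarith [Real.pi_pos]) hy2

lemma aux_prod (r c s : ℝ) (h : s ^ 2 + c ^ 2 = 1) :
    ((c - r : ℝ) + (s : ℝ) * Complex.I) =
      ((c : ℂ) + (s : ℂ) * Complex.I) * ((1 - r * c : ℝ) + ((r * s : ℝ) : ℂ) * Complex.I) := by
  have h' : (s : ℂ) ^ 2 + (c : ℂ) ^ 2 = 1 := by exact_mod_cast h
  push_cast
  linear_combination (r : ℂ) * h' + (-(r : ℂ) * (s : ℂ) ^ 2) * Complex.I_sq

lemma aux_key {r x : ℝ} (hr0 : 0 < r) (hr1 : r < 1) (hx : x ∈ Set.Icc 0 Real.pi) :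
    iota r x = Real.arctan (r * Real.sin x / (1 - r * Real.cos x)) := by
  have hcx : Real.cos x ≤ 1 := Real.cos_le_one x
  have hcx' : -1 ≤ Real.cos x := Real.neg_one_le_cos x
  have hre : (0:ℝ) < 1 - r * Real.cos x := by nlinarith
  set w : ℂ := ((1 - r * Real.cos x : ℝ) + (r * Real.sin x : ℝ) * Complex.I) with hw
  set u : ℂ := ((Real.cos x : ℝ) + (Real.sin x : ℝ) * Complex.I) with hu
  have hwre : w.re = 1 - r * Real.cos x := by
    simp [hw, Complex.cos_ofReal_re, Complex.sin_ofReal_re]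
  have hwim : w.im = r * Real.sin x := by
    simp [hw, Complex.cos_ofReal_re, Complex.sin_ofReal_re]
  have hpyth : ((Real.sin x : ℂ)) ^ 2 + ((Real.cos x : ℂ)) ^ 2 = 1 := by
    have := Real.sin_sq_add_cos_sq x
    exact_mod_cast congrArg (fun y : ℝ => (y : ℂ)) this
  have hprod : ((Real.cos x - r : ℝ) + (Real.sin x : ℝ) * Complex.I) = u * w := by
    rw [hu, hw]
    exact aux_prod r (Real.cos x) (Real.sin x) (Real.sin_sq_add_cos_sq x)
  have hwne : w ≠ 0 := by
    intro h
    have : w.re = 0 := by rw [h]; simp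
    rw [hwre] at this; linarith
  have hune : u ≠ 0 := by
    intro h
    have h2 : Complex.normSq u = 0 := by rw [h]; simp
    rw [hu] at h2
    simp [Complex.normSq_apply, Complex.cos_ofReal_re, Complex.sin_ofReal_re] at h2
    nlinarith [Real.sin_sq_add_cos_sq x]
  have hargw : Complex.arg w = Real.arctan (r * Real.sin x / (1 - r * Real.cos x)) := by
    rw [aux_arg_arctan (by rw [hwre]; exact hre), hwre, hwim]
  have hargu : Complex.arg u = x := by
    rw [hu, Complex.ofReal_cos, Complex.ofReal_sin]
    exact Complex.arg_cos_add_sin_mul_I ⟨by linarith [hx.1, Real.pi_pos], hx.2⟩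
  have hsx : 0 ≤ Real.sin x := Real.sin_nonneg_of_nonneg_of_le_pi hx.1 hx.2
  have harct0 : 0 ≤ Real.arctan (r * Real.sin x / (1 - r * Real.cos x)) := by
    rw [← Real.arctan_zero]
    exact Real.arctan_strictMono.monotone (by positivity)
  have hmem : Complex.arg u + Complex.arg w ∈ Set.Ioc (-π) π := by
    rw [hargu, hargw]
    constructor
    · linarith [hx.1, Real.pi_pos]
    · linarith [aux_ub hr0 hr1 hx]
  rw [iota, hprod, Complex.arg_mul hune hwne hmem, hargu, hargw]
  ring

theorem stmt_7 (r : ℝ) (hr0 : 0 < r) (hr1 : r < 1) :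
    (∀ x ∈ Set.Ioo 0 Real.pi, 0 < iota r x) ∧
    Real.arccos r ∈ Set.Ioo 0 (Real.pi / 2) ∧
    iota r (Real.arccos r) = Real.pi / 2 - Real.arccos r ∧
    (∀ x ∈ Set.Icc 0 Real.pi, iota r x ≤ iota r (Real.arccos r)) ∧
    (∀ x ∈ Set.Icc 0 Real.pi, iota r x = iota r (Real.arccos r) →
      x = Real.arccos r) := by
  have ha0 : 0 < Real.arccos r := Real.arccos_pos.2 hr1
  have ha2 : Real.arccos r < π / 2 := Real.arccos_lt_pi_div_two.2 hr0
  have hamem : Real.arccos r ∈ Set.Icc 0 Real.pi := ⟨ha0.le, by linarith [Real.pi_pos]⟩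
  set s := Real.sqrt (1 - r ^ 2) with hs
  have hs0 : 0 < s := Real.sqrt_pos.2 (by nlinarith)
  have hs2 : s ^ 2 = 1 - r ^ 2 := Real.sq_sqrt (by nlinarith)
  have hca : Real.cos (Real.arccos r) = r := Real.cos_arccos (by linarith) hr1.le
  have hsa : Real.sin (Real.arccos r) = s := Real.sin_arccos r
  have hia : iota r (Real.arccos r) = Real.arctan (r / s) := by
    rw [aux_key hr0 hr1 hamem, hca, hsa]
    congr 1
    have hsne : s ≠ 0 := ne_of_gt hs0
    have hdne : 1 - r * r ≠ 0 := by nlinarith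
    field_simp
    rw [hs2, div_self (by nlinarith : (1:ℝ) - r ^ 2 ≠ 0)]
  refine ⟨?_, ⟨ha0, ha2⟩, ?_, ?_, ?_⟩
  · intro x hx
    rw [aux_key hr0 hr1 ⟨hx.1.le, hx.2.le⟩]
    have hsx : 0 < Real.sin x := Real.sin_pos_of_pos_of_lt_pi hx.1 hx.2
    have hre : (0:ℝ) < 1 - r * Real.cos x := by
      nlinarith [Real.cos_le_one x]
    rw [← Real.arctan_zero]
    exact Real.arctan_strictMono (by positivity)
  · rw [hia]
    have : Real.arctan (r / s) = Real.arctan (Real.tan (π / 2 - Real.arccos r)) := by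
      congr 1
      rw [Real.tan_pi_div_two_sub, Real.tan_eq_sin_div_cos, hca, hsa]
      field_simp
    rw [this, Real.arctan_tan (by linarith [Real.pi_pos]) (by linarith)]
  · intro x hx
    rw [aux_key hr0 hr1 hx, hia]
    apply Real.arctan_strictMono.monotone
    have hsx : 0 ≤ Real.sin x := Real.sin_nonneg_of_nonneg_of_le_pi hx.1 hx.2
    have hre : (0:ℝ) < 1 - r * Real.cos x := by
      nlinarith [Real.cos_le_one x, Real.neg_one_le_cos x]
    rw [div_le_div_iff₀ hre hs0]
    have hkey : s * Real.sin x ≤ 1 - r * Real.cos x := by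
      nlinarith [Real.sin_sq_add_cos_sq x, sq_nonneg (Real.cos x - r),
        sq_nonneg (s * Real.sin x - (1 - r * Real.cos x)), Real.sqrt_nonneg (1 - r^2)]
    nlinarith
  · intro x hx heq
    rw [aux_key hr0 hr1 hx, hia] at heq
    have heq' := Real.arctan_injective heq
    have hsx : 0 ≤ Real.sin x := Real.sin_nonneg_of_nonneg_of_le_pi hx.1 hx.2
    have hre : (0:ℝ) < 1 - r * Real.cos x := by
      nlinarith [Real.cos_le_one x, Real.neg_one_le_cos x]
    have hcr : Real.cos x = r := by
      have h1 : r * Real.sin x * s = r * (1 - r * Real.cos x) := by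
        field_simp at heq'
        linear_combination r * heq'
      have h2 : Real.sin x * s = 1 - r * Real.cos x :=
        mul_left_cancel₀ (ne_of_gt hr0) (by linear_combination h1)
      nlinarith [Real.sin_sq_add_cos_sq x, sq_nonneg (Real.cos x - r)]
    rw [← hcr, Real.arccos_cos hx.1 hx.2]
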